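/- Let A be a commutative ring, f ∈ A a non-zero-divisor, and Â = lim_n A/(f^n) the f-adic completion. If M is an A-module that is f-regular (multiplication by f on M is injective), then Â ⊗_A M is f-regular as well: multiplication by f on Â ⊗_A M is injective. -/

import Mathlib

open TensorProduct Submodule


theorem AdicCompletion.transitionMap_mk {R M : Type*} [CommRing R] [AddCommGroup M] [Module R M]
    (I : Ideal R) {m n : ℕ} (hmn : m ≤ n) (x : M) :
    AdicCompletion.transitionMap I M hmn (Submodule.Quotient.mk x) = Submodule.Quotient.mk x := rfl

section prelim
variable {A : Type} [CommRing A] (f : A)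

lemma mem_pow_smul_top_iff (n : ℕ) (x : A) :
    x ∈ ((Ideal.span {f})^n • (⊤:Submodule A A)) ↔ ∃ b, x = f^n * b := by
  rw [smul_eq_mul, Ideal.mul_top, Ideal.span_singleton_pow, Ideal.mem_span_singleton]
  exact ⟨fun ⟨b, hb⟩ => ⟨b, hb⟩, fun ⟨b, hb⟩ => ⟨b, hb⟩⟩

variable (hf : f ∈ nonZeroDivisors A)

include hf in
lemma adic_reg (c : AdicCompletion (Ideal.span {f}) A) (h : f • c = 0) : c = 0 := by
  ext n
  obtain ⟨a, ha⟩ := Submodule.Quotient.mk_surjective _ (c.val (n+1))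
  have h1 : Submodule.Quotient.mk (p := ((Ideal.span {f})^(n+1) • ⊤ : Submodule A A)) (f * a) = 0 := by
    have h2 := congrArg (fun z : AdicCompletion (Ideal.span {f}) A => z.val (n+1)) h
    simp only [AdicCompletion.val_smul_apply, AdicCompletion.val_zero_apply] at h2
    rw [← ha, ← Submodule.Quotient.mk_smul] at h2
    simpa [smul_eq_mul] using h2
  rw [Submodule.Quotient.mk_eq_zero, mem_pow_smul_top_iff] at h1
  obtain ⟨b, hb⟩ := h1
  have hab : a = f^n * b :=
    (mul_cancel_left_mem_nonZeroDivisors hf).mp (by rw [hb]; ring)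
  have hc : c.val n = AdicCompletion.transitionMap (Ideal.span {f}) A (Nat.le_succ n) (c.val (n+1)) :=
    (c.property (Nat.le_succ n)).symm
  have h0 : (0 : AdicCompletion (Ideal.span {f}) A).val n = 0 := rfl
  rw [hc, ← ha, AdicCompletion.transitionMap_mk, h0, Submodule.Quotient.mk_eq_zero,
    mem_pow_smul_top_iff]
  exact ⟨b, hab⟩

include hf in
lemma adic_decomp (x : AdicCompletion (Ideal.span {f}) A) :
    ∃ (a : A) (c : AdicCompletion (Ideal.span {f}) A),
      x = AdicCompletion.of (Ideal.span {f}) A a + f • c := by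
  choose r hr using fun n => Submodule.Quotient.mk_surjective
    ((Ideal.span {f})^n • (⊤:Submodule A A)) (x.val n)
  have key : ∀ {m n : ℕ}, m ≤ n → ∃ d, r n - r m = f^m * d := by
    intro m n hmn
    have h2 := x.property hmn
    rw [← hr n, ← hr m, AdicCompletion.transitionMap_mk] at h2
    exact (mem_pow_smul_top_iff f m _).mp ((Submodule.Quotient.eq _).mp h2)
  choose b hb using fun n => key (Nat.le_add_left 1 n)
  have hb' : ∀ n, r (n+1) - r 1 = f * b n := by
    intro n; have := hb n; rwa [pow_one] at this
  have compat : ∀ {m n : ℕ} (hmn : m ≤ n),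
      AdicCompletion.transitionMap (Ideal.span {f}) A hmn
        (Submodule.Quotient.mk (p := ((Ideal.span {f})^n • ⊤ : Submodule A A)) (b n)) =
        Submodule.Quotient.mk (b m) := by
    intro m n hmn
    rw [AdicCompletion.transitionMap_mk, Submodule.Quotient.eq, mem_pow_smul_top_iff]
    obtain ⟨d, hd⟩ := key (Nat.succ_le_succ hmn)
    refine ⟨d, (mul_cancel_left_mem_nonZeroDivisors hf).mp ?_⟩
    have h1 : f * (b n - b m) = r (n+1) - r (m+1) := by
      rw [mul_sub, ← hb' n, ← hb' m]; ring
    rw [h1, hd, pow_succ]; ring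
  set c : AdicCompletion (Ideal.span {f}) A :=
    ⟨fun n => Submodule.Quotient.mk (b n), fun hmn => compat hmn⟩ with hcdef
  refine ⟨r 1, c, ?_⟩
  ext n
  have hcval : c.val n = Submodule.Quotient.mk (b n) := rfl
  rw [AdicCompletion.val_add_apply, AdicCompletion.val_smul_apply, AdicCompletion.of_apply, hcval,
    Submodule.mkQ_apply, ← hr n, ← Submodule.Quotient.mk_smul, ← Submodule.Quotient.mk_add,
    Submodule.Quotient.eq, mem_pow_smul_top_iff]
  obtain ⟨d, hd⟩ := key (Nat.le_succ n)
  refine ⟨-d, ?_⟩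
  have hrn : r 1 + f • b n = r (n+1) := by rw [smul_eq_mul, ← hb' n]; ring
  rw [hrn]
  have : r (n+1) - r n = f^n * d := hd
  rw [show r n - r (n+1) = -(r (n+1) - r n) by ring, this]; ring

include hf in
lemma adic_of_dvd (a : A) (c : AdicCompletion (Ideal.span {f}) A)
    (h : AdicCompletion.of (Ideal.span {f}) A a = f • c) : ∃ b, a = f * b := by
  obtain ⟨u, hu⟩ := Submodule.Quotient.mk_surjective _ (c.val 1)
  have h1 := congrArg (fun z : AdicCompletion (Ideal.span {f}) A => z.val 1) h
  simp only [AdicCompletion.val_smul_apply, AdicCompletion.of_apply] at h1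
  rw [← hu, ← Submodule.Quotient.mk_smul] at h1
  have h2 : a - f • u ∈ ((Ideal.span {f})^1 • (⊤:Submodule A A)) := by
    rw [← Submodule.Quotient.eq]
    exact h1
  rw [mem_pow_smul_top_iff, pow_one] at h2
  obtain ⟨d, hd⟩ := h2
  exact ⟨u + d, by rw [smul_eq_mul] at hd; rw [mul_add, ← hd]; ring⟩
end prelim

set_option maxHeartbeats 1000000
set_option synthInstance.maxHeartbeats 400000

section tensor
variable {A : Type} [CommRing A] (f : A) (hf : f ∈ nonZeroDivisors A)
  (M : Type) [AddCommGroup M] [Module A M]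

noncomputable def adicOne : AdicCompletion (Ideal.span {f}) A :=
  AdicCompletion.of (Ideal.span {f}) A 1

lemma of_eq_smul_one (a : A) :
    AdicCompletion.of (Ideal.span {f}) A a = a • adicOne f := by
  rw [adicOne, ← map_smul, smul_eq_mul, mul_one]

include hf in
lemma claim1 (R : Submodule A (M →₀ A)) (y : AdicCompletion (Ideal.span {f}) A ⊗[A] R) :
    ∃ (ρ : R) (z : AdicCompletion (Ideal.span {f}) A ⊗[A] R),
      LinearMap.lTensor _ R.subtype y =
        adicOne f ⊗ₜ (ρ : M →₀ A) + f • LinearMap.lTensor _ R.subtype z := by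
  induction y with
  | zero => exact ⟨0, 0, by simp⟩
  | tmul ξ ρ =>
      obtain ⟨a, c, hac⟩ := adic_decomp f hf ξ
      refine ⟨a • ρ, c ⊗ₜ ρ, ?_⟩
      rw [LinearMap.lTensor_tmul, LinearMap.lTensor_tmul, hac, add_tmul,
        of_eq_smul_one, smul_tmul, smul_tmul']
      congr 1
  | add u v hu hv =>
      obtain ⟨ρ1, z1, h1⟩ := hu
      obtain ⟨ρ2, z2, h2⟩ := hv
      refine ⟨ρ1 + ρ2, z1 + z2, ?_⟩
      rw [map_add, h1, h2, map_add, Submodule.coe_add, tmul_add, smul_add]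
      exact add_add_add_comm _ _ _ _

include hf in
lemma claim2 (w : AdicCompletion (Ideal.span {f}) A ⊗[A] (M →₀ A)) (g0 : M →₀ A)
    (h : f • w = adicOne f ⊗ₜ g0) :
    ∃ g : M →₀ A, g0 = f • g ∧ w = adicOne f ⊗ₜ g := by
  classical
  set E := TensorProduct.finsuppScalarRight A A (AdicCompletion (Ideal.span {f}) A) M with hE
  have hcomp : ∀ i : M, f • (E w) i = AdicCompletion.of (Ideal.span {f}) A (g0 i) := by
    intro i
    have h1 : E (f • w) = E (adicOne f ⊗ₜ[A] g0) := congrArg E h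
    rw [E.map_smul] at h1
    have h2 : (f • E w) i = E (adicOne f ⊗ₜ[A] g0) i := congrArg (fun v => v i) h1
    rw [Finsupp.smul_apply] at h2
    rw [h2, hE, TensorProduct.finsuppScalarRight_apply_tmul_apply, ← of_eq_smul_one]
  have hdvd : ∀ i : M, ∃ b, g0 i = f * b := by
    intro i
    exact adic_of_dvd f hf (g0 i) ((E w) i) (hcomp i).symm
  choose d hd using hdvd
  have hd0 : ∀ i : M, g0 i ≠ 0 → i ∈ g0.support := fun i hi => Finsupp.mem_support_iff.mpr hi
  have hdz : ∀ i : M, d i ≠ 0 → i ∈ g0.support := by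
    intro i hi
    rw [Finsupp.mem_support_iff]
    intro hgi
    apply hi
    have : d i * f = 0 := by rw [mul_comm, ← hd i, hgi]
    exact (mul_right_mem_nonZeroDivisors_eq_zero_iff hf).mp this
  set g : M →₀ A := Finsupp.onFinset g0.support d hdz with hg
  have hgapp : ∀ i, g i = d i := fun i => rfl
  refine ⟨g, ?_, ?_⟩
  · ext i
    rw [Finsupp.smul_apply, hgapp, smul_eq_mul, hd i]
  · apply E.injective
    refine Finsupp.ext fun i => ?_
    rw [hE, TensorProduct.finsuppScalarRight_apply_tmul_apply, hgapp, ← of_eq_smul_one]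
    have h2 : f • ((E w) i - AdicCompletion.of (Ideal.span {f}) A (d i)) = 0 := by
      rw [smul_sub, hcomp i, ← map_smul, smul_eq_mul, ← hd i, sub_self]
    have := adic_reg f hf _ h2
    rw [sub_eq_zero] at this
    exact this

include hf in
lemma main_lemma (hreg : Function.Injective (fun m : M => f • m))
    (π : (M →₀ A) →ₗ[A] M) (hπs : Function.Surjective π)
    (z : AdicCompletion (Ideal.span {f}) A ⊗[A] M) (hz : f • z = 0) : z = 0 := by
  classical
  obtain ⟨w, hw⟩ := LinearMap.lTensor_surjective (AdicCompletion (Ideal.span {f}) A) hπs z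
  have hexact := lTensor_exact (R := A) (M := ↥(LinearMap.ker π)) (N := (M →₀ A)) (P := M)
    (f := (LinearMap.ker π).subtype) (g := π)
    (AdicCompletion (Ideal.span {f}) A) (π.exact_subtype_ker_map) hπs
  have h1 : (LinearMap.lTensor (AdicCompletion (Ideal.span {f}) A) π) (f • w) = 0 := by
    rw [map_smul, hw, hz]
  obtain ⟨y, hy⟩ := (hexact _).mp h1
  obtain ⟨ρ, z', hz'⟩ := claim1 f hf M (LinearMap.ker π) y
  rw [hy] at hz'
  have h3 : f • (w - LinearMap.lTensor (AdicCompletion (Ideal.span {f}) A)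
      (LinearMap.ker π).subtype z') = adicOne f ⊗ₜ (ρ : M →₀ A) := by
    rw [smul_sub]
    exact sub_eq_of_eq_add hz'
  obtain ⟨g, hg1, hg2⟩ := claim2 f hf M _ _ h3
  have hπg : π g = 0 := by
    have h4 : f • π g = 0 := by
      rw [← map_smul, ← hg1]
      exact ρ.2
    exact hreg (show (fun m : M => f • m) (π g) = (fun m : M => f • m) 0 by simpa using h4)
  have hwg : w = adicOne f ⊗ₜ g + LinearMap.lTensor (AdicCompletion (Ideal.span {f}) A)
      (LinearMap.ker π).subtype z' :=
    eq_add_of_sub_eq hg2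
  rw [← hw, hwg, map_add, LinearMap.lTensor_tmul, hπg, tmul_zero,
    hexact.apply_apply_eq_zero, add_zero]

end tensor

/-- If `f ∈ A` is a non-zero-divisor and `M` is an `f`-regular `A`-module
(multiplication by `f` is injective on `M`), then multiplication by `f` is also
injective on `Â ⊗ M`, where `Â = lim A/(fⁿ)` is the `f`-adic completion. -/
theorem stmt_17 {A : Type} [CommRing A] (f : A) (hf : f ∈ nonZeroDivisors A)
    (M : Type) [AddCommGroup M] [Module A M]
    (hreg : Function.Injective (fun m : M => f • m)) :
    Function.Injective
      (fun x : (AdicCompletion (Ideal.span {f}) A) ⊗[A] M => f • x) := by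
  intro a b h
  have h1 : f • (a - b) = 0 := by
    rw [smul_sub, sub_eq_zero]
    exact h
  have := main_lemma f hf M hreg (Finsupp.linearCombination A (id : M → M))
    (Finsupp.linearCombination_id_surjective A M) (a - b) h1
  rwa [sub_eq_zero] at this
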